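/- Let s ∈ R be a condition and let ⟨(pₙ,qₙ) : n ∈ ℕ⟩ be such that for every n: pₙ ∈ Aₛ, (pₙ,qₙ) ∈ Bₛ, pₙ₊₁ <ₛ pₙ, and qₙ ⊆ qₙ₊₁. Then there exist a condition r ∈ R with r ≤_R s, an element p ∈ Aᵣ, and a function q ∈ Col(Aᵣ) such that (p,q) ∈ Bᵣ, p <ᵣ pₙ for every n, and q ⊇ qₙ for every n. -/
import Mathlib

open Cardinal Set

noncomputable section

/-- A partial function from ordinals to ordinals, represented by its graph. -/
abbrev ColFun := Set (Ordinal × Ordinal)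

/-- `q ∈ Col(X)`: `q` is (the graph of) a function whose domain is an ordinal `< ω₁`
and whose range is a subset of `X`. -/
def IsColFun (X : Set Ordinal) (q : ColFun) : Prop :=
  (∀ a b b', (a, b) ∈ q → (a, b') ∈ q → b = b') ∧
  (∃ δ : Ordinal, δ < (aleph 1).ord ∧ ∀ a : Ordinal, (∃ b, (a, b) ∈ q) ↔ a < δ) ∧
  (∀ a b, (a, b) ∈ q → b ∈ X)

/-- A quadruple `((A, <), B, C, F)`; `F` is a partial function represented by its graph. -/
structure Quad where
  A : Set Ordinal
  lt : Ordinal → Ordinal → Prop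
  B : Set (Ordinal × ColFun)
  C : Set (ℕ → Ordinal)
  F : Set ((ℕ → Ordinal) × (Ordinal × ColFun) × ℕ)

namespace Quad

/-- `x ≤ᵣ y`. -/
def leR (r : Quad) (x y : Ordinal) : Prop := r.lt x y ∨ x = y

/-- `x ⊥ᵣ y`: no `z ∈ Aᵣ` with `z ≤ᵣ x` and `z ≤ᵣ y`. -/
def Incomp (r : Quad) (x y : Ordinal) : Prop := ¬ ∃ z ∈ r.A, r.leR z x ∧ r.leR z y

/-- `r` is a forcing condition. -/
def IsCond (r : Quad) : Prop :=
  -- (1) A is a countable set of ordinals < ω₂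
  r.A.Countable ∧
  (∀ a ∈ r.A, a < (aleph 2).ord) ∧
  -- (2) <ᵣ is a strict partial order on A
  (∀ a b, r.lt a b → a ∈ r.A ∧ b ∈ r.A) ∧
  (∀ a b c, r.lt a b → r.lt b c → r.lt a c) ∧
  -- (3) b <ᵣ a implies a < b (whence <ᵣ is irreflexive and asymmetric)
  (∀ a b, r.lt b a → a < b) ∧
  -- (4) B is a countable subset of A × Col(A) with p ∈ range q for (p,q) ∈ B
  r.B.Countable ∧
  (∀ pq ∈ r.B, pq.1 ∈ r.A ∧ IsColFun r.A pq.2 ∧ ∃ α, (α, pq.1) ∈ pq.2) ∧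
  -- (5) C is a countable set of <ᵣ-descending sequences in A without lower bound
  r.C.Countable ∧
  (∀ a ∈ r.C, (∀ n, a n ∈ r.A) ∧ (∀ n, r.lt (a (n + 1)) (a n)) ∧
    ¬ ∃ z ∈ r.A, ∀ n, r.leR z (a n)) ∧
  -- (6) F is a (partial) function whose domain consists exactly of the pairs
  -- (⟨aₙ⟩, (p,q)) with ⟨aₙ⟩ ∈ C, (p,q) ∈ B, p ≥ a₀, satisfying (*)
  (∀ x ∈ r.F, x.1 ∈ r.C ∧ x.2.1 ∈ r.B ∧ x.1 0 ≤ x.2.1.1) ∧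
  (∀ a pq, a ∈ r.C → pq ∈ r.B → a 0 ≤ pq.1 → ∃! m : ℕ, (a, pq, m) ∈ r.F) ∧
  (∀ a pq m, (a, pq, m) ∈ r.F →
    ∀ p'q' ∈ r.B, r.leR p'q'.1 pq.1 → pq.2 ⊆ p'q'.2 →
      r.lt p'q'.1 (a m) → ∃ k, r.Incomp p'q'.1 (a k))

/-- `Ext r s`: `r ≤_R s`, i.e. `r` is stronger than `s`. -/
def Ext (r s : Quad) : Prop :=
  s.A ⊆ r.A ∧
  (∀ a ∈ s.A, ∀ b ∈ s.A, (r.lt a b ↔ s.lt a b)) ∧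
  (∀ a ∈ s.A, ∀ b ∈ s.A, (r.Incomp a b ↔ s.Incomp a b)) ∧
  s.B ⊆ r.B ∧ s.C ⊆ r.C ∧ s.F ⊆ r.F

end Quad

open Quad in
/-- Any descending ω-chain `⟨(pₙ,qₙ)⟩` in `Bₛ` gets a lower bound `(p,q) ∈ Bᵣ` in some
stronger condition `r`. -/
theorem stmt4 (s : Quad) (hs : s.IsCond) (p : ℕ → Ordinal) (q : ℕ → ColFun)
    (hpA : ∀ n, p n ∈ s.A) (hB : ∀ n, (p n, q n) ∈ s.B)
    (hdec : ∀ n, s.lt (p (n + 1)) (p n)) (hq : ∀ n, q n ⊆ q (n + 1)) :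
    ∃ r : Quad, r.IsCond ∧ Ext r s ∧ ∃ pp ∈ r.A, ∃ qq : ColFun,
      IsColFun r.A qq ∧ (pp, qq) ∈ r.B ∧ (∀ n, r.lt pp (p n)) ∧ (∀ n, q n ⊆ qq) := by
  obtain ⟨hA_cnt, hA_bd, hmem, htrans, hord, hB_cnt, hB_spec, hC_cnt, hC_spec,
    hF_dom, hF_un, hF_prop⟩ := hs
  -- basic facts about leR
  have hlt_leR : ∀ {x y z}, s.lt x y → s.leR y z → s.lt x z := by
    rintro x y z h (h' | rfl)
    · exact htrans _ _ _ h h'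
    · exact h
  have hleR_lt : ∀ {x y z}, s.leR x y → s.lt y z → s.lt x z := by
    rintro x y z (h | rfl) h'
    · exact htrans _ _ _ h h'
    · exact h'
  have hleR_trans : ∀ {x y z}, s.leR x y → s.leR y z → s.leR x z := by
    rintro x y z h (h' | rfl)
    · exact Or.inl (hleR_lt h h')
    · exact h
  -- monotonicity of the chain
  have hp_le : ∀ m n, m ≤ n → s.leR (p n) (p m) := by
    intro m n hmn
    induction n, hmn using Nat.le_induction with
    | base => exact Or.inr rfl
    | succ n hmn ih => exact Or.inl (hlt_leR (hdec n) ih)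
  have hp_lt : ∀ m n, m < n → s.lt (p n) (p m) :=
    fun m n h => hleR_lt (hp_le (m + 1) n h) (hdec m)
  have hq_le : ∀ m n, m ≤ n → q m ⊆ q n := by
    intro m n hmn
    induction n, hmn using Nat.le_induction with
    | base => exact subset_rfl
    | succ n hmn ih => exact ih.trans (hq n)
  have hleR_memA : ∀ {n y}, s.leR (p n) y → y ∈ s.A := by
    rintro n y (h | rfl)
    · exact (hmem _ _ h).2
    · exact hpA n
  -- key lemma
  have key0 : ∀ a ∈ s.C, ∃ n : ℕ, ∀ m, ¬ s.leR (p m) (a n) := by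
    intro a ha
    by_contra hcon
    push_neg at hcon
    have h : ∀ n, ∃ m, s.leR (p m) (a n) := hcon
    obtain ⟨m0, hm0⟩ := h 0
    have ha0 : a 0 ≤ p m0 := by
      rcases hm0 with h' | h'
      · exact (hord _ _ h').le
      · exact h'.ge
    obtain ⟨M, hM, _⟩ := hF_un a (p m0, q m0) ha (hB m0) ha0
    obtain ⟨m1, hm1⟩ := h M
    set j := max m0 m1 + 1 with hj
    have hj0 : m0 ≤ j := le_trans (le_max_left _ _) (Nat.le_succ _)
    have hj1 : m1 < j := Nat.lt_succ_of_le (le_max_right _ _)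
    have hlt : s.lt (p j) (a M) := hlt_leR (hp_lt m1 j hj1) hm1
    obtain ⟨k, hk⟩ := hF_prop a (p m0, q m0) M hM (p j, q j) (hB j)
      (hp_le m0 j hj0) (hq_le m0 j hj0) hlt
    obtain ⟨m2, hm2⟩ := h k
    exact hk ⟨p (max j m2), hpA _,
      hp_le j (max j m2) (le_max_left _ _),
      hleR_trans (hp_le m2 (max j m2) (le_max_right _ _)) hm2⟩
  have key' : ∀ a : ℕ → Ordinal, ∃ n : ℕ, a ∈ s.C → ∀ m, ¬ s.leR (p m) (a n) := by
    intro a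
    by_cases ha : a ∈ s.C
    · obtain ⟨n, hn⟩ := key0 a ha
      exact ⟨n, fun _ => hn⟩
    · exact ⟨0, fun h => absurd h ha⟩
  choose nfun hnfun using key'
  -- the new ordinal pstar
  obtain ⟨e, he⟩ := hA_cnt.exists_eq_range ⟨p 0, hpA 0⟩
  set pstar := (⨆ n, e n) + 1 with hpstar_def
  have hAlt : ∀ x ∈ s.A, x < pstar := by
    intro x hx
    rw [he] at hx
    obtain ⟨n, rfl⟩ := hx
    exact lt_of_le_of_lt (Ordinal.le_iSup e n) (lt_add_one _)
  have hreg2 : (aleph 2).IsRegular := by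
    have h := isRegular_aleph_succ (1 : Ordinal)
    rwa [show Order.succ (1 : Ordinal) = 2 by
      rw [← Ordinal.add_one_eq_succ]; norm_num] at h
  have hpstar_lt : pstar < (aleph 2).ord := by
    have h1 : (⨆ n, e n) < (aleph 2).ord := by
      apply Cardinal.iSup_lt_ord_lift_of_isRegular hreg2
      · simp only [mk_nat, lift_aleph0]
        exact aleph0_lt_aleph_one.trans (aleph_lt_aleph.2 one_lt_two)
      · intro n
        exact hA_bd _ (he ▸ mem_range_self n)
    rw [hpstar_def, Ordinal.add_one_eq_succ]
    exact (Cardinal.isSuccLimit_ord (aleph0_le_aleph 2)).succ_lt h1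
  have hpstar_notA : pstar ∉ s.A := fun h => lt_irrefl _ (hAlt _ h)
  have hneq : ∀ x ∈ s.A, x ≠ pstar := fun x hx h => hpstar_notA (h ▸ hx)
  -- the function qq
  have hcol : ∀ n, IsColFun s.A (q n) := fun n => (hB_spec _ (hB n)).2.1
  choose δf hδf1 hδf2 using fun n => (hcol n).2.1
  set δ := ⨆ n, δf n with hδ_def
  have hδlt : δ < (aleph 1).ord := by
    rw [hδ_def]
    exact Cardinal.iSup_lt_ord_lift_of_isRegular isRegular_aleph_one
      (by simp only [mk_nat, lift_aleph0]; exact aleph0_lt_aleph_one) hδf1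
  have hδ1 : δ + 1 < (aleph 1).ord := by
    rw [Ordinal.add_one_eq_succ]
    exact (Cardinal.isSuccLimit_ord (aleph0_le_aleph 1)).succ_lt hδlt
  set qq : ColFun := (⋃ n, q n) ∪ {((δ : Ordinal), pstar)} with hqq_def
  have hδf_le : ∀ n, δf n ≤ δ := fun n => Ordinal.le_iSup δf n
  have hδ_not : ∀ n b, (δ, b) ∈ q n → False := by
    intro n b h
    exact absurd ((hδf2 n δ).1 ⟨b, h⟩) (not_lt.2 (hδf_le n))
  have hqn_sub : ∀ n, q n ⊆ qq := fun n =>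
    (subset_iUnion q n).trans subset_union_left
  have hqq_fun : ∀ a b b', (a, b) ∈ qq → (a, b') ∈ qq → b = b' := by
    intro a b b' hb hb'
    rcases hb with hb | hb
    · rcases hb' with hb' | hb'
      · obtain ⟨_, ⟨n, rfl⟩, hn⟩ := hb
        obtain ⟨_, ⟨m, rfl⟩, hm⟩ := hb'
        exact (hcol (max n m)).1 a b b' (hq_le n _ (le_max_left _ _) hn)
          (hq_le m _ (le_max_right _ _) hm)
      · obtain ⟨_, ⟨n, rfl⟩, hn⟩ := hb
        simp only [mem_singleton_iff, Prod.mk.injEq] at hb'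
        obtain ⟨rfl, rfl⟩ := hb'
        exact absurd hn (fun h => hδ_not n b h)
    · simp only [mem_singleton_iff, Prod.mk.injEq] at hb
      obtain ⟨rfl, rfl⟩ := hb
      rcases hb' with hb' | hb'
      · obtain ⟨_, ⟨n, rfl⟩, hn⟩ := hb'
        exact absurd hn (fun h => hδ_not n b' h)
      · simp only [mem_singleton_iff, Prod.mk.injEq] at hb'
        exact hb'.2.symm
  have hqq_dom : ∀ a : Ordinal, (∃ b, (a, b) ∈ qq) ↔ a < δ + 1 := by
    intro a
    constructor
    · rintro ⟨b, hb | hb⟩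
      · obtain ⟨_, ⟨n, rfl⟩, hn⟩ := hb
        exact lt_of_lt_of_le ((hδf2 n a).1 ⟨b, hn⟩) ((hδf_le n).trans (lt_add_one δ).le)
      · simp only [mem_singleton_iff, Prod.mk.injEq] at hb
        obtain ⟨rfl, rfl⟩ := hb
        exact lt_add_one _
    · intro h
      rcases lt_or_eq_of_le (Order.lt_succ_iff.1 (by rwa [← Ordinal.add_one_eq_succ])) with h' | h'
      · obtain ⟨n, hn⟩ := Ordinal.lt_iSup_iff.1 h'
        obtain ⟨b, hb⟩ := (hδf2 n a).2 hn
        exact ⟨b, hqn_sub n hb⟩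
      · exact ⟨pstar, Or.inr (by rw [h']; exact rfl)⟩
  have hqq_ran : ∀ a b, (a, b) ∈ qq → b ∈ insert pstar s.A := by
    rintro a b (hb | hb)
    · obtain ⟨_, ⟨n, rfl⟩, hn⟩ := hb
      exact Or.inr ((hcol n).2.2 a b hn)
    · simp only [mem_singleton_iff, Prod.mk.injEq] at hb
      exact Or.inl hb.2
  have hqq_col : IsColFun (insert pstar s.A) qq :=
    ⟨hqq_fun, ⟨δ + 1, hδ1, hqq_dom⟩, hqq_ran⟩
  -- the condition r
  set r : Quad :=
    { A := insert pstar s.A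
      lt := fun x y => s.lt x y ∨ (x = pstar ∧ ∃ n, s.leR (p n) y)
      B := insert (pstar, qq) s.B
      C := s.C
      F := s.F ∪ {x | ∃ a ∈ s.C, x = (a, ((pstar, qq) : Ordinal × ColFun), nfun a)} }
    with hr_def
  -- characterizations
  have hrlt_iff : ∀ a ∈ s.A, ∀ b, (r.lt a b ↔ s.lt a b) := by
    intro a ha b
    constructor
    · rintro (h | ⟨rfl, _⟩)
      · exact h
      · exact absurd ha hpstar_notA
    · exact Or.inl
  have hrleR_iff : ∀ a ∈ s.A, ∀ b, (r.leR a b ↔ s.leR a b) := by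
    intro a ha b
    unfold Quad.leR
    rw [hrlt_iff a ha b]
  have hrleR_pstar : ∀ z, r.leR z pstar → z = pstar := by
    rintro z ((h | ⟨rfl, n, hn⟩) | rfl)
    · exact absurd (hmem _ _ h).2 hpstar_notA
    · exact absurd (hleR_memA hn) hpstar_notA
    · rfl
  have hpstar_lt_iff : ∀ b ∈ s.A, (r.lt pstar b ↔ ∃ n, s.leR (p n) b) := by
    intro b _
    constructor
    · rintro (h | ⟨_, hn⟩)
      · exact absurd (hmem _ _ h).1 hpstar_notA
      · exact hn
    · exact fun h => Or.inr ⟨rfl, h⟩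
  have hrleR_of_s : ∀ {x y}, s.leR x y → r.leR x y := by
    rintro x y (h | rfl)
    · exact Or.inl (Or.inl h)
    · exact Or.inr rfl
  have hInc_iff : ∀ a ∈ s.A, ∀ b ∈ s.A, (r.Incomp a b ↔ s.Incomp a b) := by
    intro a ha b hb
    unfold Quad.Incomp
    constructor
    · intro h ⟨z, hz, h1, h2⟩
      exact h ⟨z, Or.inr hz, hrleR_of_s h1, hrleR_of_s h2⟩
    · rintro h ⟨z, hz | hz, h1, h2⟩
      · subst hz
        have h1' : ∃ n, s.leR (p n) a := by
          rcases h1 with h1 | h1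
          · exact (hpstar_lt_iff a ha).1 h1
          · exact absurd h1.symm (hneq a ha)
        have h2' : ∃ n, s.leR (p n) b := by
          rcases h2 with h2 | h2
          · exact (hpstar_lt_iff b hb).1 h2
          · exact absurd h2.symm (hneq b hb)
        obtain ⟨n, hn⟩ := h1'
        obtain ⟨m, hm⟩ := h2'
        exact h ⟨p (max n m), hpA _,
          hleR_trans (hp_le n _ (le_max_left _ _)) hn,
          hleR_trans (hp_le m _ (le_max_right _ _)) hm⟩
      · exact h ⟨z, hz, (hrleR_iff z hz a).1 h1, (hrleR_iff z hz b).1 h2⟩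
  have hpstar_bot : ∀ a : ℕ → Ordinal, a ∈ s.C → ¬ r.leR pstar (a (nfun a)) := by
    intro a ha hle
    have hk : a (nfun a) ∈ s.A := (hC_spec a ha).1 (nfun a)
    rcases hle with hlt' | heq
    · obtain ⟨n, hn⟩ := (hpstar_lt_iff _ hk).1 hlt'
      exact hnfun a ha n hn
    · exact hneq _ hk heq.symm
  -- r is a condition
  have hr_cond : r.IsCond := by
    refine ⟨hA_cnt.insert pstar, ?_, ?_, ?_, ?_, hB_cnt.insert _, ?_, hC_cnt, ?_, ?_, ?_, ?_⟩
    · rintro a (rfl | ha)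
      · exact hpstar_lt
      · exact hA_bd a ha
    · rintro a b (h | ⟨rfl, n, hn⟩)
      · exact ⟨Or.inr (hmem _ _ h).1, Or.inr (hmem _ _ h).2⟩
      · exact ⟨Or.inl rfl, Or.inr (hleR_memA hn)⟩
    · rintro a b c (hab | ⟨rfl, n, hn⟩) (hbc | ⟨rfl, m, hm⟩)
      · exact Or.inl (htrans _ _ _ hab hbc)
      · exact absurd (hmem _ _ hab).2 hpstar_notA
      · exact Or.inr ⟨rfl, n, Or.inl (hleR_lt hn hbc)⟩
      · exact absurd (hleR_memA hn) hpstar_notA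
    · rintro a b (h | ⟨rfl, n, hn⟩)
      · exact hord _ _ h
      · exact hAlt _ (hleR_memA hn)
    · rintro pq (rfl | hpq)
      · exact ⟨Or.inl rfl, hqq_col, δ, Or.inr rfl⟩
      · obtain ⟨h1, ⟨hf1, hf2, hf3⟩, h3⟩ := hB_spec pq hpq
        exact ⟨Or.inr h1, ⟨hf1, hf2, fun a b hab => Or.inr (hf3 a b hab)⟩, h3⟩
    · intro a ha
      refine ⟨fun n => Or.inr ((hC_spec a ha).1 n),
        fun n => Or.inl ((hC_spec a ha).2.1 n), ?_⟩
      rintro ⟨z, hz | hz, hzle⟩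
      · subst hz
        exact hpstar_bot a ha (hzle (nfun a))
      · exact (hC_spec a ha).2.2 ⟨z, hz, fun n =>
          (hrleR_iff z hz (a n)).1 (hzle n)⟩
    · rintro x (hx | ⟨a, ha, rfl⟩)
      · obtain ⟨h1, h2, h3⟩ := hF_dom x hx
        exact ⟨h1, Or.inr h2, h3⟩
      · exact ⟨ha, Or.inl rfl, le_of_lt (hAlt _ ((hC_spec a ha).1 0))⟩
    · rintro a pq ha (rfl | hpq) h0
      · refine ⟨nfun a, Or.inr ⟨a, ha, rfl⟩, ?_⟩
        rintro m (hm | ⟨a', _, hm⟩)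
        · exact absurd (hB_spec _ (hF_dom _ hm).2.1).1 hpstar_notA
        · simp only [Prod.mk.injEq] at hm
          obtain ⟨rfl, -, rfl⟩ := hm
          rfl
      · obtain ⟨m, hm, hm_un⟩ := hF_un a pq ha hpq h0
        refine ⟨m, Or.inl hm, ?_⟩
        rintro m' (hm' | ⟨a', _, hm'⟩)
        · exact hm_un m' hm'
        · simp only [Prod.mk.injEq] at hm'
          obtain ⟨rfl, rfl, rfl⟩ := hm'
          exact absurd ((hB_spec _ hpq).1) hpstar_notA
    · rintro a pq m (hF | ⟨a', ha', hnew⟩) p'q' hp'B hle hsub hlt'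
      · -- old triple of F
        obtain ⟨haC, hpqB, _⟩ := hF_dom _ hF
        have hpq1 : pq.1 ∈ s.A := (hB_spec _ hpqB).1
        rcases hp'B with rfl | hp'B
        · -- p'q' = (pstar, qq)
          refine ⟨nfun a, ?_⟩
          rintro ⟨z, _, hz1, hz2⟩
          have hz := hrleR_pstar z hz1
          subst hz
          exact hpstar_bot a haC hz2
        · have hp'1 : p'q'.1 ∈ s.A := (hB_spec _ hp'B).1
          have hle' : s.leR p'q'.1 pq.1 := (hrleR_iff _ hp'1 _).1 hle
          have hlt'' : s.lt p'q'.1 (a m) := (hrlt_iff _ hp'1 _).1 hlt'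
          obtain ⟨k, hk⟩ := hF_prop a pq m hF p'q' hp'B hle' hsub hlt''
          exact ⟨k, (hInc_iff _ hp'1 _ ((hC_spec a haC).1 k)).2 hk⟩
      · -- new triple of F
        simp only [Prod.mk.injEq] at hnew
        obtain ⟨rfl, rfl, rfl⟩ := hnew
        have hzz := hrleR_pstar p'q'.1 hle
        rw [hzz] at hlt'
        exact absurd (Or.inl hlt') (hpstar_bot a ha')
  refine ⟨r, hr_cond, ⟨subset_insert _ _, fun a ha b _ => hrlt_iff a ha b,
    hInc_iff, subset_insert _ _, subset_rfl, subset_union_left⟩,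
    pstar, Or.inl rfl, qq, hqq_col, Or.inl rfl,
    fun n => Or.inr ⟨rfl, n, Or.inr rfl⟩, hqn_sub⟩
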